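/- arXiv:2006.11189 — 2 statements merged into one kernel-verified Lean document; each statement's English description precedes it below -/
import Mathlib

section
/- Let ω and 𝒮 be classes of objects of an abelian category 𝒞 such that ω is closed under extensions and ω ∩ 𝒮 is an ω-projective relative generator in ω. Then: (1) ω ∩ 𝒮 is an ω^∧-projective relative generator in ω^∧; moreover, for any C ∈ ω^∧ with resdim_ω(C) ≥ 1 there exists a short exact sequence 0 → K → F → C → 0 with F ∈ ω ∩ 𝒮 and resdim_ω(K) = resdim_ω(C) − 1; (2) ω^∧ is closed under extensions; (3) if ω is closed under direct summands, then so is ω^∧; (4) if ω is closed under isomorphisms and 𝒮 is closed under kernels of epimorphisms between its objects and cokernels of monomorphisms between its objects, then ω^∧ ∩ 𝒮 = (ω ∩ 𝒮)^∧. -/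
namespace CutPaper

open CategoryTheory CategoryTheory.Limits CategoryTheory.Abelian ZeroObject

universe w v u

variable {C : Type u} [Category.{v} C] [Abelian C]

/-- There exists a short exact sequence `0 ⟶ X ⟶ Y ⟶ Z ⟶ 0` in `C`. -/
def SES (X Y Z : C) : Prop :=
  ∃ (f : X ⟶ Y) (g : Y ⟶ Z) (zero : f ≫ g = 0),
    (ShortComplex.mk f g zero).ShortExact

/-- A class of objects is closed under isomorphisms. -/
def ClosedUnderIso (A : Set C) : Prop :=
  ∀ ⦃X Y : C⦄, (X ≅ Y) → X ∈ A → Y ∈ A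

/-- A class of objects is closed under direct summands (i.e. retracts). -/
def ClosedUnderDirectSummands (A : Set C) : Prop :=
  ∀ ⦃X Y : C⦄ (i : X ⟶ Y) (r : Y ⟶ X), i ≫ r = 𝟙 X → Y ∈ A → X ∈ A

/-- A class of objects is closed under extensions. -/
def ClosedUnderExtensions (A : Set C) : Prop :=
  ∀ ⦃X Y Z : C⦄, SES X Y Z → X ∈ A → Z ∈ A → Y ∈ A

/-- A class of objects is closed under kernels of epimorphisms between its objects. -/
def ClosedUnderEpiKernels (A : Set C) : Prop :=
  ∀ ⦃X Y Z : C⦄, SES X Y Z → Y ∈ A → Z ∈ A → X ∈ A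

/-- A class of objects is closed under cokernels of monomorphisms between its objects. -/
def ClosedUnderMonoCokernels (A : Set C) : Prop :=
  ∀ ⦃X Y Z : C⦄, SES X Y Z → X ∈ A → Y ∈ A → Z ∈ A

/-- A class is left thick if it is closed under extensions, epi-kernels and direct summands. -/
def LeftThick (A : Set C) : Prop :=
  ClosedUnderExtensions A ∧ ClosedUnderEpiKernels A ∧ ClosedUnderDirectSummands A

/-- A class is right thick if closed under extensions, mono-cokernels and direct summands. -/
def RightThick (A : Set C) : Prop :=
  ClosedUnderExtensions A ∧ ClosedUnderMonoCokernels A ∧ ClosedUnderDirectSummands A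

/-- A class is thick if it is both left and right thick. -/
def IsThickClass (A : Set C) : Prop := LeftThick A ∧ RightThick A

/-- The smallest thick class containing `F`. -/
def ThickClosure (F : Set C) : Set C := ⋂₀ {T : Set C | IsThickClass T ∧ F ⊆ T}

/-- A class is closed under finite (binary) coproducts. -/
def ClosedUnderBinaryCoproducts (A : Set C) : Prop :=
  ∀ ⦃X Y : C⦄, X ∈ A → Y ∈ A → (X ⊞ Y) ∈ A

/-- `ω` is a relative cogenerator in `A`: `ω ⊆ A` and every `X ∈ A` fits in a short
exact sequence `0 → X → W → X' → 0` with `W ∈ ω`, `X' ∈ A`. -/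
def IsRelativeCogenerator (ω A : Set C) : Prop :=
  ω ⊆ A ∧ ∀ X ∈ A, ∃ W X', W ∈ ω ∧ X' ∈ A ∧ SES X W X'

/-- `ν` is a relative generator in `ω`: `ν ⊆ ω` and every `W ∈ ω` fits in a short
exact sequence `0 → W' → V → W → 0` with `V ∈ ν`, `W' ∈ ω`. -/
def IsRelativeGenerator (ν ω : Set C) : Prop :=
  ν ⊆ ω ∧ ∀ W ∈ ω, ∃ V W', V ∈ ν ∧ W' ∈ ω ∧ SES W' V W

/-- The objects of `B`-resolution dimension at most `n` (the class `B^∧_n`). -/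
def ResDimLE (B : Set C) : ℕ → Set C
  | 0 => {X | ∃ B₀ ∈ B, Nonempty (X ≅ B₀)}
  | (n + 1) => ResDimLE B n ∪ {X | ∃ K B₀, K ∈ ResDimLE B n ∧ B₀ ∈ B ∧ SES K B₀ X}

/-- The class `B^∧` of objects of finite `B`-resolution dimension. -/
def ResFin (B : Set C) : Set C := {X | ∃ n, X ∈ ResDimLE B n}

/-- The `B`-resolution dimension of an object, valued in `ℕ∞`. -/
noncomputable def resDim (B : Set C) (X : C) : ℕ∞ :=
  sInf ((fun n : ℕ => (n : ℕ∞)) '' {n | X ∈ ResDimLE B n})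

/-- The objects of `B`-coresolution dimension at most `n` (the class `B^∨_n`). -/
def CoresDimLE (B : Set C) : ℕ → Set C
  | 0 => {X | ∃ B₀ ∈ B, Nonempty (X ≅ B₀)}
  | (n + 1) => CoresDimLE B n ∪ {X | ∃ B₀ K, B₀ ∈ B ∧ K ∈ CoresDimLE B n ∧ SES X B₀ K}

/-- The `B`-coresolution dimension of an object, valued in `ℕ∞`. -/
noncomputable def coresDim (B : Set C) (X : C) : ℕ∞ :=
  sInf ((fun n : ℕ => (n : ℕ∞)) '' {n | X ∈ CoresDimLE B n})

/-- The class of `(𝒳, 𝒴)`-Gorenstein projective objects: 0-th cycles of exact,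
`Hom(-, 𝒴)`-acyclic complexes with components in `𝒳`. -/
def GorensteinProj (𝒳 𝒴 : Set C) : Set C :=
  {M | ∃ K : ChainComplex C ℤ,
    (∀ m : ℤ, K.X m ∈ 𝒳) ∧
    (∀ m : ℤ, K.ExactAt m) ∧
    (∀ Y₀ ∈ 𝒴, ∀ m : ℤ, ∀ f : K.X m ⟶ Y₀, K.d (m + 1) m ≫ f = 0 →
      ∃ g : K.X (m - 1) ⟶ Y₀, K.d m (m - 1) ≫ g = f) ∧
    Nonempty (M ≅ K.cycles 0)}

section HasExt

variable [HasExt.{w} C]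

/-- `Ext¹(A, B) = 0`. -/
def ext1Zero (A B : C) : Prop := Subsingleton (Abelian.Ext.{w} A B 1)

/-- `Extⁱ(A, B) = 0` for all `i ≥ 1`. -/
def extVanish (A B : C) : Prop := ∀ i : ℕ, 1 ≤ i → Subsingleton (Abelian.Ext.{w} A B i)

/-- `Extⁱ(X, Y) = 0` for all `i ≥ 1`, `X ∈ 𝒜`, `Y ∈ ℬ`. -/
def ExtPairVanish (𝒜 ℬ : Set C) : Prop := ∀ X ∈ 𝒜, ∀ Y ∈ ℬ, extVanish.{w} X Y

/-- The right `Ext¹`-orthogonal complement `𝒜^{⊥1}`. -/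
def rightPerp1 (𝒜 : Set C) : Set C := {N | ∀ X ∈ 𝒜, ext1Zero.{w} X N}

/-- The total right orthogonal complement `𝒜^{⊥}`. -/
def rightPerp (𝒜 : Set C) : Set C := {N | ∀ X ∈ 𝒜, extVanish.{w} X N}

/-- The left `Ext¹`-orthogonal complement `^{⊥1}ℬ`. -/
def leftPerp1 (ℬ : Set C) : Set C := {M | ∀ Y ∈ ℬ, ext1Zero.{w} M Y}

/-- `(𝒜, ℬ)` is a left cotorsion pair cut along `𝒮`. -/
def LeftCutCotorsion (𝒜 ℬ 𝒮 : Set C) : Prop :=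
  ClosedUnderDirectSummands 𝒜 ∧ 𝒜 ∩ 𝒮 = leftPerp1.{w} ℬ ∩ 𝒮

/-- `(𝒜, ℬ)` is a complete left cotorsion pair cut along `𝒮`. -/
def CompleteLeftCutCotorsion (𝒜 ℬ 𝒮 : Set C) : Prop :=
  LeftCutCotorsion.{w} 𝒜 ℬ 𝒮 ∧ ∀ S ∈ 𝒮, ∃ B₀ A₀, B₀ ∈ ℬ ∧ A₀ ∈ 𝒜 ∧ SES B₀ A₀ S

/-- `(𝒜, ℬ)` is a right cotorsion pair cut along `𝒮`. -/
def RightCutCotorsion (𝒜 ℬ 𝒮 : Set C) : Prop :=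
  ClosedUnderDirectSummands ℬ ∧ ℬ ∩ 𝒮 = rightPerp1.{w} 𝒜 ∩ 𝒮

/-- `(𝒜, ℬ)` is a complete right cotorsion pair cut along `𝒮`. -/
def CompleteRightCutCotorsion (𝒜 ℬ 𝒮 : Set C) : Prop :=
  RightCutCotorsion.{w} 𝒜 ℬ 𝒮 ∧ ∀ S ∈ 𝒮, ∃ B₀ A₀, B₀ ∈ ℬ ∧ A₀ ∈ 𝒜 ∧ SES S B₀ A₀

/-- `(𝒜, ℬ)` is a complete cotorsion pair cut along `𝒮`. -/
def CompleteCutCotorsion (𝒜 ℬ 𝒮 : Set C) : Prop :=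
  CompleteLeftCutCotorsion.{w} 𝒜 ℬ 𝒮 ∧ CompleteRightCutCotorsion.{w} 𝒜 ℬ 𝒮

/-- `(𝒜, ℬ)` is a complete left cotorsion pair in `C`. -/
def CompleteLeftCotorsionPair (𝒜 ℬ : Set C) : Prop :=
  𝒜 = leftPerp1.{w} ℬ ∧ ∀ X : C, ∃ B₀ A₀, B₀ ∈ ℬ ∧ A₀ ∈ 𝒜 ∧ SES B₀ A₀ X

/-- `(𝒜, ℬ)` is a complete cotorsion pair in `C`. -/
def CompleteCotorsionPair (𝒜 ℬ : Set C) : Prop :=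
  CompleteLeftCotorsionPair.{w} 𝒜 ℬ ∧ ℬ = rightPerp1.{w} 𝒜 ∧
    ∀ X : C, ∃ B₀ A₀, B₀ ∈ ℬ ∧ A₀ ∈ 𝒜 ∧ SES X B₀ A₀

/-- `(𝒳, ω)` is a left Frobenius pair in `C`. -/
def LeftFrobenius (𝒳 ω : Set C) : Prop :=
  LeftThick 𝒳 ∧ ClosedUnderDirectSummands ω ∧
    ExtPairVanish.{w} 𝒳 ω ∧ IsRelativeCogenerator ω 𝒳

/-- `(𝒳, ω)` is a left Frobenius pair cut along `𝒮`. -/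
def LeftFrobeniusCutAlong (𝒳 ω 𝒮 : Set C) : Prop :=
  LeftThick 𝒳 ∧
  LeftFrobenius.{w} (𝒳 ∩ 𝒮) (ω ∩ 𝒮) ∧
  (ExtPairVanish.{w} (ω ∩ 𝒮) ω ∧ IsRelativeGenerator (ω ∩ 𝒮) ω) ∧
  (ClosedUnderExtensions ω ∧ ClosedUnderDirectSummands ω)

/-- `(𝒜, ℬ)` is a left weak AB context in `C`. -/
def LeftWeakABContext (𝒜 ℬ : Set C) : Prop :=
  LeftFrobenius.{w} 𝒜 (𝒜 ∩ ℬ) ∧ RightThick ℬ ∧ ℬ ⊆ ResFin 𝒜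

/-- `(𝒜, ℬ)` is a left weak AB context cut along `𝒮`. -/
def LeftWeakABContextCutAlong (𝒜 ℬ 𝒮 : Set C) : Prop :=
  LeftFrobeniusCutAlong.{w} 𝒜 (𝒜 ∩ ℬ) 𝒮 ∧ RightThick (ℬ ∩ 𝒮) ∧
    ℬ ∩ 𝒮 ⊆ ResFin (𝒜 ∩ 𝒮)

/-- `(𝒳, 𝒴)` is a GP-admissible pair. -/
def GPAdmissible (𝒳 𝒴 : Set C) : Prop :=
  ExtPairVanish.{w} 𝒳 𝒴 ∧
  (∀ M : C, ∃ X₀, X₀ ∈ 𝒳 ∧ ∃ p : X₀ ⟶ M, Epi p) ∧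
  ClosedUnderBinaryCoproducts 𝒳 ∧ ClosedUnderBinaryCoproducts 𝒴 ∧
  ClosedUnderExtensions 𝒳 ∧
  IsRelativeCogenerator (𝒳 ∩ 𝒴) 𝒳

/-- The class `ℰ_l(𝒜, ℬ)` of objects admitting a suitable left approximation. -/
def EClassLeft (𝒜 ℬ : Set C) : Set C :=
  {X | ∃ B₀ A₀, B₀ ∈ ℬ ∧ A₀ ∈ 𝒜 ∧ SES B₀ A₀ X}

/-- The maximal left cotorsion cut `𝕊_l(𝒜, ℬ)`. -/
def MaxLeftCut (𝒜 ℬ : Set C) : Set C :=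
  ⋃₀ {𝒮 | CompleteLeftCutCotorsion.{w} 𝒜 ℬ 𝒮}

/-- `pd(M) ≤ n`, via vanishing of `Ext` in degrees `> n`. -/
def pdLE (M : C) (n : ℕ) : Prop :=
  ∀ i : ℕ, n < i → ∀ N : C, Subsingleton (Abelian.Ext.{w} M N i)

/-- The projective dimension of an object, valued in `ℕ∞`. -/
noncomputable def pd (M : C) : ℕ∞ :=
  sInf ((fun n : ℕ => (n : ℕ∞)) '' {n | pdLE.{w} M n})

/-- The projective dimension of a class of objects. -/
noncomputable def pdClass (𝒜 : Set C) : ℕ∞ := ⨆ M ∈ 𝒜, pd.{w} M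

/-- The `𝔓_𝒮`-condition of the second correspondence theorem. -/
def PPair (𝒮 ℱ 𝒢 : Set C) : Prop :=
  CompleteCutCotorsion.{w} ℱ 𝒢 (ThickClosure ℱ) ∧
  ExtPairVanish.{w} ℱ 𝒢 ∧
  IsRelativeGenerator (ℱ ∩ 𝒢 ∩ 𝒮) (ℱ ∩ 𝒢) ∧
  IsRelativeCogenerator (ℱ ∩ 𝒢 ∩ 𝒮) (ℱ ∩ 𝒢)

end HasExt

/-- The class of projective objects of `C`. -/
def ProjClass (C : Type u) [Category.{v} C] : Set C := {P : C | Projective P}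

section HasExt
variable (C) [HasExt.{w} C]

/-- The finitistic dimension of `C`. -/
noncomputable def Findim : ℕ∞ := pdClass.{w} (ResFin (ProjClass C))

end HasExt




/-! ### Auxiliary machinery for Lemma 3.5 -/

section SESAux

variable {C : Type u} [Category.{v} C] [Abelian C]

/-- Factoring through kernel data. -/
lemma kf_lift_comp {X Y W : C} {f : X ⟶ Y} {k : W ⟶ X} {w : k ≫ f = 0}
    (h : IsLimit (KernelFork.ofι k w)) {W' : C} (t : W' ⟶ X) (ht : t ≫ f = 0) :
    (KernelFork.IsLimit.lift' h t ht).1 ≫ k = t :=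
  (KernelFork.IsLimit.lift' h t ht).2

lemma ses_of_iso {X Y Z X' Y' Z' : C} (eX : X ≅ X') (eY : Y ≅ Y') (eZ : Z ≅ Z')
    (h : SES X Y Z) : SES X' Y' Z' := by
  obtain ⟨f, g, w, hS⟩ := h
  refine ⟨eX.inv ≫ f ≫ eY.hom, eY.inv ≫ g ≫ eZ.hom, ?_, ?_⟩
  · simp [reassoc_of% w]
  · refine ShortComplex.shortExact_of_iso
      (ShortComplex.isoMk (S₁ := ShortComplex.mk f g w) eX eY eZ (by simp) (by simp)) hS

lemma ses_iso₁ {X X' Y Z : C} (e : X ≅ X') (h : SES X Y Z) : SES X' Y Z :=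
  ses_of_iso e (Iso.refl _) (Iso.refl _) h

lemma ses_iso₂ {X Y Y' Z : C} (e : Y ≅ Y') (h : SES X Y Z) : SES X Y' Z :=
  ses_of_iso (Iso.refl _) e (Iso.refl _) h

lemma ses_iso₃ {X Y Z Z' : C} (e : Z ≅ Z') (h : SES X Y Z) : SES X Y Z' :=
  ses_of_iso (Iso.refl _) (Iso.refl _) e h

/-- A short exact sequence from an epimorphism together with kernel data. -/
lemma ses_of_isKernel {X Y Z : C} (f : X ⟶ Y) (g : Y ⟶ Z) [Epi g] (w : f ≫ g = 0)
    (h : IsLimit (KernelFork.ofι f w)) : SES X Y Z :=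
  ⟨f, g, w, ShortComplex.ShortExact.mk'
    ((ShortComplex.mk f g w).exact_of_f_is_kernel h) (mono_of_isLimit_fork h) ‹_›⟩

/-- The SES `0 → 0 → X ≅ Y → 0`. -/
lemma ses_iso_right {X Y : C} (e : X ≅ Y) : SES (0 : C) X Y := by
  refine ses_of_isKernel 0 e.hom (by simp) ?_
  refine KernelFork.IsLimit.ofι _ _ (fun {W'} g' hg' => 0) ?_ ?_
  · intro W' g' hg'
    have hg0 : g' = 0 := by
      have := hg' =≫ e.inv
      simpa using this
    show (0 : W' ⟶ (0 : C)) ≫ 0 = g'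
    simp [hg0]
  · intro W' g' hg' m hm
    show m = 0
    apply Limits.HasZeroObject.to_zero_ext

/-- The SES `0 → X ≅ Y → 0 → 0`. -/
lemma ses_iso_left {X Y : C} (e : X ≅ Y) : SES X Y (0 : C) := by
  have hepi : Epi (0 : Y ⟶ (0 : C)) := by
    constructor
    intro W u v _
    apply Limits.HasZeroObject.from_zero_ext
  refine ses_of_isKernel e.hom 0 (by simp) ?_
  refine KernelFork.IsLimit.ofι _ _ (fun {W'} g' _ => g' ≫ e.inv) ?_ ?_
  · intro W' g' hg'
    show (g' ≫ e.inv) ≫ e.hom = g'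
    simp
  · intro W' g' hg' m hm
    show m = g' ≫ e.inv
    rw [← hm, Category.assoc, e.hom_inv_id, Category.comp_id]

/-- The split SES `X → X ⊞ Y → Y`. -/
lemma ses_biprod (X Y : C) : SES X (X ⊞ Y) Y :=
  ⟨biprod.inl, biprod.snd, by simp,
    (ShortComplex.Splitting.ofHasBinaryBiproduct X Y).shortExact⟩

/-- Direct sum of two short exact sequences. -/
lemma ses_biprod_map {X Y Z X' Y' Z' : C} (h : SES X Y Z) (h' : SES X' Y' Z') :
    SES (X ⊞ X') (Y ⊞ Y') (Z ⊞ Z') := by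
  obtain ⟨f, g, w, hS⟩ := h
  obtain ⟨f', g', w', hS'⟩ := h'
  have hm : Mono f := hS.mono_f
  have hm' : Mono f' := hS'.mono_f
  have he : Epi g := hS.epi_g
  have he' : Epi g' := hS'.epi_g
  have hepi : Epi (biprod.map g g') := by
    constructor
    intro W u v huv
    ext
    · have := biprod.inl ≫= huv
      rw [biprod.inl_map_assoc, biprod.inl_map_assoc] at this
      exact (cancel_epi g).1 this
    · have := biprod.inr ≫= huv
      rw [biprod.inr_map_assoc, biprod.inr_map_assoc] at this
      exact (cancel_epi g').1 this
  refine ses_of_isKernel (biprod.map f f') (biprod.map g g') (by ext <;> simp [w, w']) ?_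
  refine KernelFork.IsLimit.ofι _ _ ?_ ?_ ?_
  · intro W t ht
    have h₁ : (t ≫ biprod.fst) ≫ g = 0 := by
      have := ht =≫ biprod.fst
      simpa using this
    have h₂ : (t ≫ biprod.snd) ≫ g' = 0 := by
      have := ht =≫ biprod.snd
      simpa using this
    exact biprod.lift (KernelFork.IsLimit.lift' hS.fIsKernel _ h₁).1
      (KernelFork.IsLimit.lift' hS'.fIsKernel _ h₂).1
  · intro W t ht
    show biprod.lift _ _ ≫ biprod.map f f' = t
    ext
    · simp only [Category.assoc, biprod.map_fst, biprod.lift_fst_assoc]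
      exact kf_lift_comp hS.fIsKernel _ _
    · simp only [Category.assoc, biprod.map_snd, biprod.lift_snd_assoc]
      exact kf_lift_comp hS'.fIsKernel _ _
  · intro W t ht m hm
    show m = biprod.lift _ _
    ext
    · rw [biprod.lift_fst]
      apply (cancel_mono f).1
      rw [kf_lift_comp hS.fIsKernel, ← hm]
      simp
    · rw [biprod.lift_snd]
      apply (cancel_mono f').1
      rw [kf_lift_comp hS'.fIsKernel, ← hm]
      simp

/-- Pulling back a short exact sequence `X → Y → Z` along any `h : T ⟶ Z`
yields a short exact sequence `X → Y ×_Z T → T`. -/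
lemma ses_pullback {X Y Z T : C} (g : Y ⟶ Z) [Epi g] (f : X ⟶ Y) (w : f ≫ g = 0)
    (hf : IsLimit (KernelFork.ofι f w)) (h : T ⟶ Z) : SES X (pullback g h) T := by
  have hw : (pullback.lift f 0 (by simp [w]) : X ⟶ pullback g h) ≫ pullback.snd g h = 0 := by
    exact pullback.lift_snd _ _ _
  refine ses_of_isKernel _ (pullback.snd g h) hw ?_
  refine KernelFork.IsLimit.ofι _ _ ?_ ?_ ?_
  · intro W t ht
    have h₁ : (t ≫ pullback.fst g h) ≫ g = 0 := by
      rw [Category.assoc, pullback.condition, ← Category.assoc, ht, zero_comp]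
    exact (KernelFork.IsLimit.lift' hf _ h₁).1
  · intro W t ht
    apply pullback.hom_ext
    · show (_ ≫ pullback.lift f 0 _) ≫ pullback.fst g h = t ≫ pullback.fst g h
      rw [Category.assoc, pullback.lift_fst]
      exact kf_lift_comp hf _ _
    · show (_ ≫ pullback.lift f 0 _) ≫ pullback.snd g h = t ≫ pullback.snd g h
      rw [Category.assoc, pullback.lift_snd, comp_zero, ht]
  · intro W t ht m hm
    show m = (KernelFork.IsLimit.lift' hf _ _).1
    have hmono : Mono f := mono_of_isLimit_fork hf
    apply (cancel_mono f).1
    rw [kf_lift_comp hf, ← hm]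
    rw [Category.assoc]; exact congrArg (fun z => m ≫ z) (pullback.lift_fst _ _ _).symm

/-- Kernel of a composition of two epimorphisms: if `K = ker p` (`p : V ⟶ M`) and
`X = ker q` (`q : M ⟶ Y`), then there is `L` with `SES K L X` and `SES L V Y`. -/
lemma ses_comp {K V M X Y : C} (p : V ⟶ M) (q : M ⟶ Y) [Epi p] [Epi q]
    (k : K ⟶ V) (wk : k ≫ p = 0) (hk : IsLimit (KernelFork.ofι k wk))
    (x : X ⟶ M) (wx : x ≫ q = 0) (hx : IsLimit (KernelFork.ofι x wx)) :
    ∃ L : C, SES K L X ∧ SES L V Y := by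
  have hxmono : Mono x := mono_of_isLimit_fork hx
  refine ⟨pullback p x, ses_pullback p k wk hk x, ?_⟩
  have hepi : Epi (p ≫ q) := epi_comp p q
  have w : pullback.fst p x ≫ p ≫ q = 0 := by
    rw [← Category.assoc, pullback.condition, Category.assoc, wx, comp_zero]
  refine ses_of_isKernel _ (p ≫ q) w ?_
  refine KernelFork.IsLimit.ofι _ _ ?_ ?_ ?_
  · intro W t ht
    have h₁ : (t ≫ p) ≫ q = 0 := by rw [Category.assoc, ← ht]
    exact pullback.lift t (KernelFork.IsLimit.lift' hx _ h₁).1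
      (kf_lift_comp hx _ h₁).symm
  · intro W t ht
    show pullback.lift _ _ _ ≫ pullback.fst p x = t
    exact pullback.lift_fst _ _ _
  · intro W t ht m hm
    show m = pullback.lift _ _ _
    apply pullback.hom_ext
    · exact hm.trans (pullback.lift_fst _ _ _).symm
    · apply (cancel_mono x).1
      rw [pullback.lift_snd, Category.assoc, ← pullback.condition, kf_lift_comp hx, ← hm,
        Category.assoc]

end SESAux


section ResDimAux

variable {C : Type u} [Category.{v} C] [Abelian C]

lemma resDimLE_mono_class {B B' : Set C} (h : B ⊆ B') :
    ∀ n, ResDimLE B n ⊆ ResDimLE B' n := by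
  intro n
  induction n with
  | zero =>
    rintro X ⟨B₀, hB₀, e⟩
    exact ⟨B₀, h hB₀, e⟩
  | succ n ih =>
    rintro X (hX | ⟨K, B₀, hK, hB₀, hses⟩)
    · exact Or.inl (ih hX)
    · exact Or.inr ⟨K, B₀, ih hK, h hB₀, hses⟩

lemma resDimLE_le {B : Set C} {n m : ℕ} (h : n ≤ m) : ResDimLE B n ⊆ ResDimLE B m := by
  induction m with
  | zero => rw [Nat.le_zero.1 h]
  | succ m ih =>
    rcases Nat.lt_or_ge n (m+1) with h' | h'
    · exact fun X hX => Or.inl (ih (by omega) hX)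
    · have : n = m + 1 := by omega
      subst this; exact fun X hX => hX

lemma mem_resDimLE_zero_of_mem {B : Set C} {X : C} (h : X ∈ B) : X ∈ ResDimLE B 0 :=
  ⟨X, h, ⟨Iso.refl _⟩⟩

lemma resDimLE_iso {B : Set C} : ∀ n, ∀ {X X' : C}, (X ≅ X') → X ∈ ResDimLE B n →
    X' ∈ ResDimLE B n := by
  intro n
  induction n with
  | zero =>
    rintro X X' e ⟨B₀, hB₀, ⟨e'⟩⟩
    exact ⟨B₀, hB₀, ⟨e.symm ≪≫ e'⟩⟩
  | succ n ih =>
    rintro X X' e (hX | ⟨K, B₀, hK, hB₀, hses⟩)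
    · exact Or.inl (ih e hX)
    · exact Or.inr ⟨K, B₀, hK, hB₀, ses_iso₃ e hses⟩

lemma mem_resDimLE_succ {B : Set C} {K B₀ X : C} (hses : SES K B₀ X) (hK : K ∈ ResDimLE B n)
    (hB₀ : B₀ ∈ B) : X ∈ ResDimLE B (n+1) :=
  Or.inr ⟨K, B₀, hK, hB₀, hses⟩

lemma resFin_of_resDimLE {B : Set C} {X : C} {n : ℕ} (h : X ∈ ResDimLE B n) : X ∈ ResFin B :=
  ⟨n, h⟩

variable {ω : Set C}

/-- Lemma A : an extension of an object of level `m` by an object of level `0`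
has level `m`. -/
lemma lemA (hext : ClosedUnderExtensions ω) :
    ∀ m, ∀ {X Y Z : C}, SES X Y Z → X ∈ ResDimLE ω 0 → Z ∈ ResDimLE ω m →
      Y ∈ ResDimLE ω m := by
  intro m
  induction m with
  | zero =>
    rintro X Y Z hses ⟨B₁, hB₁, ⟨e₁⟩⟩ ⟨B₂, hB₂, ⟨e₂⟩⟩
    exact mem_resDimLE_zero_of_mem
      (hext (ses_of_iso e₁ (Iso.refl _) e₂ hses) hB₁ hB₂)
  | succ m ih =>
    rintro X Y Z hses hX (hZ | ⟨K, B₀, hK, hB₀, hses'⟩)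
    · exact resDimLE_le (Nat.le_succ m) (ih hses hX hZ)
    · -- pull back both SES's over Z
      obtain ⟨f, g, w, hS⟩ := hses
      obtain ⟨k, q, wq, hT⟩ := hses'
      have hg : Epi g := hS.epi_g
      have hq : Epi q := hT.epi_g
      -- SES X (pullback g q) B₀
      have h₁ : SES X (pullback g q) B₀ := ses_pullback g f w hS.fIsKernel q
      -- SES K (pullback q g) Y, transported to pullback g q
      have h₂ : SES K (pullback g q) Y :=
        ses_iso₂ (pullbackSymmetry q g) (ses_pullback q k wq hT.fIsKernel g)
      -- the middle object is an extension of `B₀ ∈ ω` by `X` of level 0, hence in ω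
      obtain ⟨B₁, hB₁, ⟨e₁⟩⟩ := hX
      have hP : pullback g q ∈ ω :=
        hext (ses_iso₁ e₁ h₁) hB₁ hB₀
      exact mem_resDimLE_succ h₂ hK hP

/-- The relative generator lemma with dimension control: any `X` of level `n` admits
`SES K V X` with `V ∈ ω ∩ 𝒮` and `K` of level `n - 1`. -/
lemma gen_lemma {𝒮 : Set C} (hext : ClosedUnderExtensions ω)
    (hgen : IsRelativeGenerator (ω ∩ 𝒮) ω) :
    ∀ n, ∀ X ∈ ResDimLE ω n, ∃ K V, V ∈ ω ∩ 𝒮 ∧ K ∈ ResDimLE ω (n-1) ∧ SES K V X := by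
  intro n
  induction n with
  | zero =>
    rintro X ⟨W, hW, ⟨e⟩⟩
    obtain ⟨V, W', hV, hW', hses⟩ := hgen.2 W hW
    exact ⟨W', V, hV, mem_resDimLE_zero_of_mem hW', ses_iso₃ e.symm hses⟩
  | succ n ih =>
    rintro X (hX | ⟨K, B₀, hK, hB₀, hses⟩)
    · obtain ⟨K, V, hV, hK, hses⟩ := ih X hX
      exact ⟨K, V, hV, resDimLE_le (by omega) hK, hses⟩
    · obtain ⟨V, B', hV, hB', hses'⟩ := hgen.2 B₀ hB₀
      -- hses' : SES B' V B₀, hses : SES K B₀ X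
      obtain ⟨b, p, wp, hT⟩ := hses'
      obtain ⟨kk, q, wq, hU⟩ := hses
      have hp : Epi p := hT.epi_g
      have hq : Epi q := hU.epi_g
      obtain ⟨L, hL₁, hL₂⟩ := ses_comp p q b wp hT.fIsKernel kk wq hU.fIsKernel
      -- hL₁ : SES B' L K, hL₂ : SES L V X
      have hLlevel : L ∈ ResDimLE ω n :=
        lemA hext n hL₁ (mem_resDimLE_zero_of_mem hB') hK
      exact ⟨L, V, hV, by simpa using hLlevel, hL₂⟩

end ResDimAux


section ExtAux

variable {C : Type u} [Category.{v} C] [Abelian C]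

section Unsingle

variable [HasDerivedCategory.{w} C]

/-- The natural isomorphism `singleFunctor C 0 ⋙ homologyFunctor C 0 ≅ 𝟭 C`. -/
noncomputable def singleCompHomologyIso :
    DerivedCategory.singleFunctor C 0 ⋙ DerivedCategory.homologyFunctor C 0 ≅ 𝟭 C :=
  Functor.isoWhiskerRight ((SingleFunctors.evaluation _ _ 0).mapIso
      (DerivedCategory.singleFunctorsPostcompQIso C)) (DerivedCategory.homologyFunctor C 0) ≪≫
    Functor.associator _ _ _ ≪≫
    Functor.isoWhiskerLeft (CochainComplex.singleFunctor C 0)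
      (DerivedCategory.homologyFunctorFactors C 0) ≪≫
    HomologicalComplex.homologyFunctorSingleIso C (ComplexShape.up ℤ) 0

/-- Turn a morphism between single objects in the derived category into a morphism in `C`. -/
noncomputable def unsingle {X Y : C}
    (φ : (DerivedCategory.singleFunctor C 0).obj X ⟶ (DerivedCategory.singleFunctor C 0).obj Y) :
    X ⟶ Y :=
  (singleCompHomologyIso (C := C)).inv.app X ≫
    (DerivedCategory.homologyFunctor C 0).map φ ≫ (singleCompHomologyIso (C := C)).hom.app Y

lemma unsingle_map {X Y : C} (f : X ⟶ Y) :
    unsingle ((DerivedCategory.singleFunctor C 0).map f) = f := by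
  have := (singleCompHomologyIso (C := C)).hom.naturality f
  dsimp only [Functor.comp_map, Functor.id_map] at this
  rw [unsingle, this, Iso.inv_hom_id_app_assoc]

lemma unsingle_comp {X Y Z : C}
    (φ : (DerivedCategory.singleFunctor C 0).obj X ⟶ (DerivedCategory.singleFunctor C 0).obj Y)
    (ψ : (DerivedCategory.singleFunctor C 0).obj Y ⟶ (DerivedCategory.singleFunctor C 0).obj Z) :
    unsingle (φ ≫ ψ) = unsingle φ ≫ unsingle ψ := by
  simp [unsingle]

end Unsingle

variable [HasExt.{w} C]

/-- Extract a morphism from a degree-zero Ext element. -/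
noncomputable def extToHom {X Y : C} (α : Abelian.Ext.{w} X Y 0) : X ⟶ Y :=
  letI := HasDerivedCategory.standard C
  unsingle (α.hom ≫ (shiftFunctorZero' (DerivedCategory C) ((0:ℕ):ℤ) (by simp)).hom.app _)

lemma extToHom_mk₀ {X Y : C} (f : X ⟶ Y) : extToHom (Ext.mk₀ f) = f := by
  letI := HasDerivedCategory.standard C
  rw [extToHom, Ext.mk₀_hom]
  rw [ShiftedHom.mk₀]
  simp only [Category.assoc, Iso.inv_hom_id_app, Category.comp_id]
  exact unsingle_map f

lemma extToHom_comp_mk₀ {X Y Z : C} (α : Abelian.Ext.{w} X Y 0) (g : Y ⟶ Z) :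
    extToHom (α.comp (Ext.mk₀ g) (add_zero 0)) = extToHom α ≫ g := by
  letI := HasDerivedCategory.standard C
  rw [extToHom, extToHom]
  have h1 : (α.comp (Ext.mk₀ g) (add_zero 0)).hom =
      α.hom ≫ ((DerivedCategory.singleFunctor C 0).map g)⟦((0:ℕ):ℤ)⟧' :=
    (Ext.hom_comp_singleFunctor_map_shift (C := C) α g).symm
  rw [h1]
  have h2 := (shiftFunctorZero' (DerivedCategory C) ((0:ℕ):ℤ) (by simp)).hom.naturality
    ((DerivedCategory.singleFunctor C 0).map g)
  dsimp only [Functor.id_map] at h2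
  rw [Category.assoc, h2, ← Category.assoc]
  rw [unsingle_comp, unsingle_map]

lemma mk₀_add' {X Y : C} (u v : X ⟶ Y) :
    Ext.mk₀ (u + v) = (Ext.mk₀ u + Ext.mk₀ v : Abelian.Ext.{w} X Y 0) := by
  letI := HasDerivedCategory.standard C
  apply Ext.ext
  rw [Ext.add_hom, Ext.mk₀_hom, Ext.mk₀_hom, Ext.mk₀_hom]
  dsimp [ShiftedHom.mk₀]
  rw [Functor.map_add, Preadditive.add_comp]

/-- Ext vanishing transfers along retracts in the second variable. -/
lemma extVanish_of_retract_right {V X Y : C} (i : X ⟶ Y) (r : Y ⟶ X) (hir : i ≫ r = 𝟙 X)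
    (h : extVanish.{w} V Y) : extVanish.{w} V X := by
  intro n hn
  have hY := h n hn
  constructor
  intro a b
  have key : ∀ α : Abelian.Ext.{w} V X n,
      α = (α.comp (Ext.mk₀ i) (add_zero n)).comp (Ext.mk₀ r) (add_zero n) := by
    intro α
    rw [Ext.comp_assoc_of_third_deg_zero, Ext.mk₀_comp_mk₀, hir, Ext.comp_mk₀_id]
  rw [key a, key b, Subsingleton.elim (a.comp (Ext.mk₀ i) (add_zero n))
    (b.comp (Ext.mk₀ i) (add_zero n))]

lemma extVanish_of_iso_right {V X Y : C} (e : X ≅ Y) (h : extVanish.{w} V Y) :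
    extVanish.{w} V X :=
  extVanish_of_retract_right e.hom e.inv e.hom_inv_id h

/-- Ext vanishing for the middle term of a SES. -/
lemma extVanish_X₂ {V X₁ X₂ X₃ : C} (hses : SES X₁ X₂ X₃)
    (h₁ : extVanish.{w} V X₁) (h₃ : extVanish.{w} V X₃) : extVanish.{w} V X₂ := by
  obtain ⟨f, g, w', hS⟩ := hses
  intro n hn
  have i₁ := h₁ n hn
  have i₃ := h₃ n hn
  constructor
  intro a b
  suffices h : ∀ α : Abelian.Ext.{w} V X₂ n, α = 0 by rw [h a, h b]
  intro α
  have hg : α.comp (Ext.mk₀ g) (add_zero n) = 0 := Subsingleton.elim _ _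
  obtain ⟨x₁, hx₁⟩ := Ext.covariant_sequence_exact₂ V hS α hg
  rw [← hx₁, Subsingleton.elim x₁ 0, Ext.zero_comp]

/-- Ext vanishing for the right term of a SES. -/
lemma extVanish_X₃ {V X₁ X₂ X₃ : C} (hses : SES X₁ X₂ X₃)
    (h₁ : extVanish.{w} V X₁) (h₂ : extVanish.{w} V X₂) : extVanish.{w} V X₃ := by
  obtain ⟨f, g, w', hS⟩ := hses
  intro n hn
  have i₂ := h₂ n hn
  have i₁ := h₁ (n+1) (by omega)
  constructor
  intro a b
  suffices h : ∀ α : Abelian.Ext.{w} V X₃ n, α = 0 by rw [h a, h b]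
  intro α
  have hδ : α.comp hS.extClass rfl = 0 := Subsingleton.elim _ _
  obtain ⟨x₂, hx₂⟩ := Ext.covariant_sequence_exact₃ V hS α rfl hδ
  rw [← hx₂, Subsingleton.elim x₂ 0, Ext.zero_comp]

lemma subsingleton_ext_biprod_left {A B Y : C} {n : ℕ}
    (hA : Subsingleton (Abelian.Ext.{w} A Y n)) (hB : Subsingleton (Abelian.Ext.{w} B Y n)) :
    Subsingleton (Abelian.Ext.{w} (A ⊞ B) Y n) := by
  constructor
  intro a b
  apply Ext.biprod_ext
  · exact Subsingleton.elim _ _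
  · exact Subsingleton.elim _ _

lemma subsingleton_ext_biprod_right {V A B : C} {n : ℕ}
    (hA : Subsingleton (Abelian.Ext.{w} V A n)) (hB : Subsingleton (Abelian.Ext.{w} V B n)) :
    Subsingleton (Abelian.Ext.{w} V (A ⊞ B) n) := by
  constructor
  intro a b
  suffices h : ∀ α : Abelian.Ext.{w} V (A ⊞ B) n, α = 0 by rw [h a, h b]
  intro α
  have h1 : α = α.comp (Ext.mk₀ (𝟙 (A ⊞ B))) (add_zero n) := (Ext.comp_mk₀_id α).symm
  rw [← biprod.total, mk₀_add', Ext.comp_add, ← Ext.mk₀_comp_mk₀, ← Ext.mk₀_comp_mk₀,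
    ← Ext.comp_assoc_of_third_deg_zero, ← Ext.comp_assoc_of_third_deg_zero,
    Subsingleton.elim (α.comp (Ext.mk₀ biprod.fst) (add_zero n)) 0,
    Subsingleton.elim (α.comp (Ext.mk₀ biprod.snd) (add_zero n)) 0,
    Ext.zero_comp, Ext.zero_comp, add_zero] at h1
  exact h1

/-- Lifting along an epimorphism when the relevant `Ext¹` vanishes. -/
lemma ses_lift {X Y Z V : C} (f : X ⟶ Y) (g : Y ⟶ Z) (w : f ≫ g = 0)
    (hS : (ShortComplex.mk f g w).ShortExact) (p : V ⟶ Z)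
    (h1 : Subsingleton (Abelian.Ext.{w} V X 1)) : ∃ t : V ⟶ Y, t ≫ g = p := by
  have hobs : (Ext.mk₀ p).comp hS.extClass (zero_add 1) = 0 := Subsingleton.elim _ _
  obtain ⟨x₂, hx₂⟩ := Ext.covariant_sequence_exact₃ V hS (Ext.mk₀ p) (zero_add 1) hobs
  refine ⟨extToHom x₂, ?_⟩
  have h2 := extToHom_comp_mk₀ x₂ g
  rw [hx₂, extToHom_mk₀] at h2
  exact h2.symm

/-- A SES splits if the relevant `Ext¹` vanishes. -/
lemma ses_split {X Y Z : C} (h : SES X Y Z)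
    (h1 : Subsingleton (Abelian.Ext.{w} Z X 1)) : Nonempty (Y ≅ X ⊞ Z) := by
  obtain ⟨f, g, w, hS⟩ := h
  obtain ⟨s, hs⟩ := ses_lift f g w hS (𝟙 Z) h1
  exact ⟨(ShortComplex.Splitting.ofExactOfSection _ hS.exact s hs hS.mono_f).isoBinaryBiproduct⟩

/-- Objects of `ω ∩ 𝒮` have vanishing higher Ext against everything of finite
`ω`-resolution dimension. -/
lemma extVanish_of_resDimLE {ω 𝒮 : Set C} (hproj : ExtPairVanish.{w} (ω ∩ 𝒮) ω) :
    ∀ n, ∀ V ∈ ω ∩ 𝒮, ∀ X ∈ ResDimLE ω n, extVanish.{w} V X := by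
  intro n
  induction n with
  | zero =>
    rintro V hV X ⟨W, hW, ⟨e⟩⟩
    exact extVanish_of_iso_right e (hproj V hV W hW)
  | succ n ih =>
    rintro V hV X (hX | ⟨K, B₀, hK, hB₀, hses⟩)
    · exact ih V hV X hX
    · exact extVanish_X₃ hses (ih V hV K hK) (hproj V hV B₀ hB₀)

lemma extVanish_of_resFin {ω 𝒮 : Set C} (hproj : ExtPairVanish.{w} (ω ∩ 𝒮) ω)
    {V X : C} (hV : V ∈ ω ∩ 𝒮) (hX : X ∈ ResFin ω) : extVanish.{w} V X := by
  obtain ⟨n, hn⟩ := hX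
  exact extVanish_of_resDimLE hproj n V hV X hn

end ExtAux


section MainAux

variable {C : Type u} [Category.{v} C] [Abelian C]

/-- The horseshoe step: given a SES `X → Y → Z`, a SES `K → V → Z` and a lift `t : V ⟶ Y`
of `V → Z`, we get a SES `K → V ⊞ X → Y`. -/
lemma ses_horseshoe {X Y Z K V : C} (f : X ⟶ Y) (g : Y ⟶ Z) (w : f ≫ g = 0)
    (hS : (ShortComplex.mk f g w).ShortExact)
    (k : K ⟶ V) (p : V ⟶ Z) (wk : k ≫ p = 0) (hT : (ShortComplex.mk k p wk).ShortExact)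
    (t : V ⟶ Y) (ht : t ≫ g = p) : SES K (V ⊞ X) Y := by
  have hmono_f : Mono f := hS.mono_f
  have hepi_g : Epi g := hS.epi_g
  have hepi_p : Epi p := hT.epi_g
  set φ : V ⊞ X ⟶ Y := biprod.desc t f with hφ
  have hrel : ∀ {W : C} (s : W ⟶ V ⊞ X), s ≫ φ = 0 →
      (s ≫ biprod.fst) ≫ t + (s ≫ biprod.snd) ≫ f = 0 := by
    intro W s hs
    calc (s ≫ biprod.fst) ≫ t + (s ≫ biprod.snd) ≫ f
        = s ≫ (biprod.fst ≫ t + biprod.snd ≫ f) := by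
          rw [Preadditive.comp_add, Category.assoc, Category.assoc]
      _ = s ≫ ((biprod.fst ≫ biprod.inl + biprod.snd ≫ biprod.inr) ≫ φ) := by
          rw [Preadditive.add_comp, Category.assoc, Category.assoc, hφ, biprod.inl_desc,
            biprod.inr_desc]
      _ = 0 := by rw [biprod.total, Category.id_comp, hs]
  -- φ is epi
  have hepi : Epi φ := by
    apply Abelian.epi_of_cokernel_π_eq_zero
    have hfc : f ≫ cokernel.π φ = 0 := by
      rw [show f = biprod.inr ≫ φ by simp [hφ], Category.assoc, cokernel.condition,
        comp_zero]
    obtain ⟨c', hc'⟩ := CokernelCofork.IsColimit.desc' hS.gIsCokernel _ hfc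
    have hc'' : g ≫ c' = cokernel.π φ := hc'
    have htc : t ≫ cokernel.π φ = 0 := by
      rw [show t = biprod.inl ≫ φ by simp [hφ], Category.assoc, cokernel.condition,
        comp_zero]
    have hpc : p ≫ c' = 0 := by
      rw [← ht, Category.assoc, hc'', htc]
    have hc0 : c' = 0 := by
      rwa [← comp_zero (f := p), cancel_epi p] at hpc
    rw [← hc'', hc0, comp_zero]
  -- the map K ⟶ V ⊞ X
  have hktg : (k ≫ t) ≫ g = 0 := by rw [Category.assoc, ht, wk]
  obtain ⟨u, hu⟩ := KernelFork.IsLimit.lift' hS.fIsKernel _ hktg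
  have hu' : u ≫ f = k ≫ t := hu
  have wι : (biprod.lift k (-u) : K ⟶ V ⊞ X) ≫ φ = 0 := by
    rw [hφ, biprod.lift_desc, Preadditive.neg_comp, hu', add_neg_cancel]
  refine ses_of_isKernel _ φ wι ?_
  refine KernelFork.IsLimit.ofι _ _ ?_ ?_ ?_
  · intro W s hs
    exact (KernelFork.IsLimit.lift' hT.fIsKernel (s ≫ biprod.fst) (by
      show (s ≫ biprod.fst) ≫ p = 0
      rw [← ht, ← Category.assoc, eq_neg_of_add_eq_zero_left (hrel s hs),
        Preadditive.neg_comp, Category.assoc, w, comp_zero, neg_zero])).1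
  · intro W s hs
    show _ ≫ biprod.lift k (-u) = s
    ext
    · rw [Category.assoc, biprod.lift_fst]
      exact kf_lift_comp hT.fIsKernel _ _
    · rw [Category.assoc, biprod.lift_snd]
      apply (cancel_mono f).1
      calc ((KernelFork.IsLimit.lift' hT.fIsKernel _ _).1 ≫ (-u)) ≫ f
          = -(((KernelFork.IsLimit.lift' hT.fIsKernel _ _).1 ≫ k) ≫ t) := by
            rw [Preadditive.comp_neg, Preadditive.neg_comp, Category.assoc, hu',
              ← Category.assoc]
        _ = -((s ≫ biprod.fst) ≫ t) := by rw [kf_lift_comp hT.fIsKernel]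
        _ = (s ≫ biprod.snd) ≫ f := (eq_neg_of_add_eq_zero_right (hrel s hs)).symm
  · intro W s hs m hm
    show m = (KernelFork.IsLimit.lift' hT.fIsKernel _ _).1
    have hmk : Mono k := hT.mono_f
    apply (cancel_mono k).1
    rw [kf_lift_comp hT.fIsKernel, ← hm, Category.assoc, biprod.lift_fst]

end MainAux


section MainAux2

variable {C : Type u} [Category.{v} C] [Abelian C] [HasExt.{w} C]
variable {ω 𝒮 : Set C}

/-- Master lemma: a quotient of an object of finite `ω`-resolution dimension by an object
of finite `ω`-resolution dimension has finite `ω`-resolution dimension. -/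
lemma quot_resFin (hext : ClosedUnderExtensions ω)
    (hproj : ExtPairVanish.{w} (ω ∩ 𝒮) ω)
    (hgen : IsRelativeGenerator (ω ∩ 𝒮) ω) :
    ∀ s a b, a + b ≤ s → ∀ {K M Y : C}, SES K M Y → K ∈ ResDimLE ω a →
      M ∈ ResDimLE ω b → Y ∈ ResFin ω := by
  intro s
  induction s using Nat.strong_induction_on with
  | _ s ihs =>
  intro a b hab K M Y hses hK hM
  match b, hM with
  | 0, hM =>
    obtain ⟨B, hB, ⟨e⟩⟩ := hM
    exact ⟨a + 1, mem_resDimLE_succ (ses_iso₂ e hses) hK hB⟩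
  | (b' + 1), Or.inl hM' =>
    have hs1 : 1 ≤ s := le_trans (by omega) hab
    exact ihs (s-1) (by omega) a b' (by omega) hses hK hM'
  | (b' + 1), Or.inr ⟨K_M, B, hKM, hB, hses'⟩ =>
    obtain ⟨kb, pB, wpB, hT⟩ := hses'
    obtain ⟨km, q, wq, hU⟩ := hses
    have hpB : Epi pB := hT.epi_g
    have hq : Epi q := hU.epi_g
    obtain ⟨L, hL₁, hL₂⟩ := ses_comp pB q kb wpB hT.fIsKernel km wq hU.fIsKernel
    -- hL₁ : SES K_M L K, hL₂ : SES L B Y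
    obtain ⟨K', V, hV, hK', hsesV⟩ := gen_lemma hext hgen a K hK
    obtain ⟨fL, gL, wL, hL⟩ := hL₁
    obtain ⟨k', π, wπ, hV'⟩ := hsesV
    have hsub : Subsingleton (Abelian.Ext.{w} V K_M 1) :=
      extVanish_of_resDimLE hproj b' V hV K_M hKM 1 le_rfl
    obtain ⟨t, ht⟩ := ses_lift fL gL wL hL π hsub
    have hh : SES K' (V ⊞ K_M) L := ses_horseshoe fL gL wL hL k' π wπ hV' t ht
    have hVK : (V ⊞ K_M) ∈ ResDimLE ω b' :=
      lemA hext b' (ses_biprod V K_M) (mem_resDimLE_zero_of_mem hV.1) hKM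
    have hs1 : 1 ≤ s := le_trans (by omega) hab
    obtain ⟨ℓ, hℓ⟩ := ihs (s-1) (by omega) (a-1) b' (by omega) hh hK' hVK
    exact ⟨ℓ + 1, mem_resDimLE_succ hL₂ hℓ hB⟩

/-- Part (2): `ω^∧` is closed under extensions. -/
lemma resFin_closedUnderExtensions (hext : ClosedUnderExtensions ω)
    (hproj : ExtPairVanish.{w} (ω ∩ 𝒮) ω)
    (hgen : IsRelativeGenerator (ω ∩ 𝒮) ω) :
    ClosedUnderExtensions (ResFin ω) := by
  rintro X Y Z hses ⟨n, hX⟩ ⟨m, hZ⟩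
  obtain ⟨K_Z, V, hV, hKZ, hsesV⟩ := gen_lemma hext hgen m Z hZ
  obtain ⟨kz, p, wp, hT⟩ := hsesV
  obtain ⟨f, g, w, hS⟩ := hses
  have hsub : Subsingleton (Abelian.Ext.{w} V X 1) :=
    extVanish_of_resDimLE hproj n V hV X hX 1 le_rfl
  obtain ⟨t, ht⟩ := ses_lift f g w hS p hsub
  have hh : SES K_Z (V ⊞ X) Y := ses_horseshoe f g w hS kz p wp hT t ht
  have hVX : (V ⊞ X) ∈ ResDimLE ω n :=
    lemA hext n (ses_biprod V X) (mem_resDimLE_zero_of_mem hV.1) hX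
  exact quot_resFin hext hproj hgen ((m-1) + n) (m-1) n le_rfl hh hKZ hVX

end MainAux2


section MainAux3

variable {C : Type u} [Category.{v} C] [Abelian C] [HasExt.{w} C]
variable {ω 𝒮 : Set C}

/-- Part (3): direct summands do not increase the resolution dimension. -/
lemma summand_resDimLE (hext : ClosedUnderExtensions ω)
    (hproj : ExtPairVanish.{w} (ω ∩ 𝒮) ω)
    (hgen : IsRelativeGenerator (ω ∩ 𝒮) ω)
    (hsum : ClosedUnderDirectSummands ω) :
    ∀ n, ∀ {X Y : C} (i : X ⟶ Y) (r : Y ⟶ X), i ≫ r = 𝟙 X → Y ∈ ResDimLE ω n →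
      X ∈ ResDimLE ω n := by
  intro n
  induction n with
  | zero =>
    rintro X Y i r hir ⟨B, hB, ⟨e⟩⟩
    refine mem_resDimLE_zero_of_mem (hsum (i ≫ e.hom) (e.inv ≫ r) ?_ hB)
    rw [Category.assoc, ← Category.assoc e.hom, e.hom_inv_id, Category.id_comp, hir]
  | succ n ih =>
    rintro X Y i r hir hY
    obtain ⟨K, V, hV, hK, hses⟩ := gen_lemma hext hgen (n+1) Y hY
    rw [Nat.add_sub_cancel] at hK
    obtain ⟨κ, β, wβ, hS⟩ := hses
    have hβ : Epi β := hS.epi_g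
    have hrepi : Epi r := by
      refine ⟨fun u v huv => ?_⟩
      rw [← Category.id_comp u, ← hir, Category.assoc, huv, ← Category.assoc, hir,
        Category.id_comp]
    -- the complementary summand
    set Z := kernel r with hZ
    set ι : Z ⟶ Y := kernel.ι r with hι
    have hρw : (𝟙 Y - r ≫ i) ≫ r = 0 := by
      rw [Preadditive.sub_comp, Category.id_comp, Category.assoc, hir, Category.comp_id,
        sub_self]
    set ρ : Y ⟶ Z := kernel.lift r (𝟙 Y - r ≫ i) hρw with hρ
    have hρι : ρ ≫ ι = 𝟙 Y - r ≫ i := kernel.lift_ι _ _ _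
    have hιρ : ι ≫ ρ = 𝟙 Z := by
      apply (cancel_mono ι).1
      rw [Category.assoc, hρι, Preadditive.comp_sub, Category.comp_id, ← Category.assoc,
        kernel.condition, zero_comp, sub_zero, Category.id_comp]
    have hiρ : i ≫ ρ = 0 := by
      apply (cancel_mono ι).1
      rw [Category.assoc, hρι, Preadditive.comp_sub, Category.comp_id, ← Category.assoc,
        hir, Category.id_comp, sub_self, zero_comp]
    have hρepi : Epi ρ := by
      refine ⟨fun u v huv => ?_⟩
      rw [← Category.id_comp u, ← hιρ, Category.assoc, huv, ← Category.assoc, hιρ,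
        Category.id_comp]
    -- i is a kernel of ρ
    have hkι : IsLimit (KernelFork.ofι i hiρ) := by
      refine KernelFork.IsLimit.ofι _ _ (fun {W} t _ => t ≫ r) ?_ ?_
      · intro W t ht
        have h0 : t ≫ (𝟙 Y - r ≫ i) = 0 := by
          rw [← hρι, ← Category.assoc, ht, zero_comp]
        rw [Preadditive.comp_sub, Category.comp_id, sub_eq_zero] at h0
        rw [Category.assoc, ← h0]
      · intro W t ht m hm
        show m = t ≫ r
        rw [← hm, Category.assoc, hir, Category.comp_id]
    -- the two syzygies
    obtain ⟨F, hF₁, hF₂⟩ := ses_comp β r κ wβ hS.fIsKernel ι (kernel.condition r)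
      (kernelIsKernel r)
    obtain ⟨E, hE₁, hE₂⟩ := ses_comp β ρ κ wβ hS.fIsKernel i hiρ hkι
    -- Y ≅ X ⊞ Z
    have eY : Y ≅ X ⊞ Z := by
      refine ⟨biprod.lift r ρ, biprod.desc i ι, ?_, ?_⟩
      · rw [biprod.lift_desc, hρι, add_sub_cancel]
      · ext
        · simp [hir]
        · simp [hiρ]
        · simp [hι, kernel.condition]
        · simp [hιρ]
    have hsum2 : SES (F ⊞ E) (V ⊞ V) Y := ses_iso₃ eY.symm (ses_biprod_map hF₂ hE₂)
    obtain ⟨γ₁, γ₂, wγ, hγ⟩ := hsum2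
    have hγepi : Epi γ₂ := hγ.epi_g
    -- Schanuel pullback
    have hQ₁ : SES K (pullback β γ₂) (V ⊞ V) := ses_pullback β κ wβ hS.fIsKernel γ₂
    have hQ₂ : SES (F ⊞ E) (pullback β γ₂) V :=
      ses_iso₂ (pullbackSymmetry γ₂ β) (ses_pullback γ₂ γ₁ wγ hγ.fIsKernel β)
    -- Ext vanishing facts
    have vanK : extVanish.{w} V K := extVanish_of_resDimLE hproj n V hV K hK
    have vanY : extVanish.{w} V Y := extVanish_of_resDimLE hproj (n+1) V hV Y hY
    have vanX : extVanish.{w} V X := extVanish_of_retract_right i r hir vanY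
    have vanZ : extVanish.{w} V Z := extVanish_of_retract_right ι ρ hιρ vanY
    have vanE : extVanish.{w} V E := extVanish_X₂ hE₁ vanK vanX
    have vanF : extVanish.{w} V F := extVanish_X₂ hF₁ vanK vanZ
    -- split the first pullback SES
    obtain ⟨eQ⟩ := ses_split hQ₁
      (subsingleton_ext_biprod_left (vanK 1 le_rfl) (vanK 1 le_rfl))
    -- transport and split the second
    have hQ₂' : SES (F ⊞ E) (K ⊞ (V ⊞ V)) V := ses_iso₂ eQ hQ₂
    obtain ⟨eM⟩ := ses_split hQ₂'
      (subsingleton_ext_biprod_right (vanF 1 le_rfl) (vanE 1 le_rfl))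
    -- level of K ⊞ (V ⊞ V)
    have hVV : (V ⊞ V) ∈ ω := hext (ses_biprod V V) hV.1 hV.1
    have hMlevel : (K ⊞ (V ⊞ V)) ∈ ResDimLE ω n :=
      resDimLE_iso n (biprod.braiding _ _)
        (lemA hext n (ses_biprod (V ⊞ V) K) (mem_resDimLE_zero_of_mem hVV) hK)
    -- F ⊞ E is a retract of K ⊞ (V ⊞ V)
    have hFE : (F ⊞ E) ∈ ResDimLE ω n := by
      refine ih (biprod.inl ≫ eM.inv) (eM.hom ≫ biprod.fst) ?_ hMlevel
      rw [Category.assoc, ← Category.assoc eM.inv, eM.inv_hom_id, Category.id_comp,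
        biprod.inl_fst]
    have hF : F ∈ ResDimLE ω n := ih biprod.inl biprod.fst (by simp) hFE
    exact mem_resDimLE_succ hF₂ hF hV.1

end MainAux3


section MainAux4

variable {C : Type u} [Category.{v} C] [Abelian C]

/-- If `𝒮` is closed under epi-kernels and contains some object, it is closed under isos. -/
lemma S_iso_closed {𝒮 : Set C} (hEK : ClosedUnderEpiKernels 𝒮) {V₀ : C} (hV₀ : V₀ ∈ 𝒮)
    {X S : C} (e : X ≅ S) (hS : S ∈ 𝒮) : X ∈ 𝒮 := by
  have h0 : (0 : C) ∈ 𝒮 := hEK (ses_iso_right (Iso.refl V₀)) hV₀ hV₀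
  exact hEK (ses_iso_left e) hS h0

variable {ω 𝒮 : Set C}

lemma p4_sub (hext : ClosedUnderExtensions ω) (hgen : IsRelativeGenerator (ω ∩ 𝒮) ω)
    (hiso : ClosedUnderIso ω) (hEK : ClosedUnderEpiKernels 𝒮) :
    ∀ n, ∀ X ∈ ResDimLE ω n, X ∈ 𝒮 → X ∈ ResFin (ω ∩ 𝒮) := by
  intro n
  induction n with
  | zero =>
    rintro X ⟨W, hW, ⟨e⟩⟩ hXS
    exact ⟨0, mem_resDimLE_zero_of_mem ⟨hiso e.symm hW, hXS⟩⟩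
  | succ n ih =>
    intro X hX hXS
    obtain ⟨K, V, hV, hK, hses⟩ := gen_lemma hext hgen (n+1) X hX
    rw [Nat.add_sub_cancel] at hK
    have hKS : K ∈ 𝒮 := hEK hses hV.2 hXS
    obtain ⟨m, hm⟩ := ih K hK hKS
    exact ⟨m + 1, mem_resDimLE_succ hses hm hV⟩

lemma p4_sup (hiso : ClosedUnderIso ω) (hEK : ClosedUnderEpiKernels 𝒮)
    (hMC : ClosedUnderMonoCokernels 𝒮) :
    ∀ n, ∀ X ∈ ResDimLE (ω ∩ 𝒮) n, X ∈ ResDimLE ω n ∧ X ∈ 𝒮 := by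
  intro n
  induction n with
  | zero =>
    rintro X ⟨V, hV, ⟨e⟩⟩
    exact ⟨⟨V, hV.1, ⟨e⟩⟩, S_iso_closed hEK hV.2 e hV.2⟩
  | succ n ih =>
    rintro X (hX | ⟨K, V, hK, hV, hses⟩)
    · obtain ⟨h₁, h₂⟩ := ih X hX
      exact ⟨resDimLE_le (Nat.le_succ n) h₁, h₂⟩
    · obtain ⟨hKω, hKS⟩ := ih K hK
      exact ⟨mem_resDimLE_succ hses hKω hV.1, hMC hses hKS hV.2⟩

lemma resDim_eq {B : Set C} {X : C} {n : ℕ} (h : X ∈ ResDimLE B n)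
    (hmin : ∀ m, X ∈ ResDimLE B m → n ≤ m) : resDim B X = n := by
  apply le_antisymm
  · exact sInf_le ⟨n, h, rfl⟩
  · refine le_sInf ?_
    rintro b ⟨m, hm, rfl⟩
    show (n : ℕ∞) ≤ (m : ℕ∞)
    exact_mod_cast hmin m hm

end MainAux4

/-- Lemma 3.5. Let `ω` and `𝒮` be classes such that `ω` is closed under
extensions and `ω ∩ 𝒮` is an `ω`-projective relative generator in `ω`. Then (1) `ω ∩ 𝒮` is an
`ω^∧`-projective relative generator in `ω^∧`, with control of resolution dimensions;
(2) `ω^∧` is closed under extensions; (3) if `ω` is closed under direct summands then so is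
`ω^∧`; (4) if moreover `ω` is closed under isomorphisms and `𝒮` is closed under epi-kernels
and mono-cokernels, then `ω^∧ ∩ 𝒮 = (ω ∩ 𝒮)^∧`. -/
theorem resFin_closure_of_relativeGenerator
    {C : Type u} [CategoryTheory.Category.{v} C] [CategoryTheory.Abelian C]
    [CategoryTheory.HasExt.{w} C]
    (ω 𝒮 : Set C)
    (hext : ClosedUnderExtensions ω)
    (hproj : ExtPairVanish.{w} (ω ∩ 𝒮) ω)
    (hgen : IsRelativeGenerator (ω ∩ 𝒮) ω) :
    ((ExtPairVanish.{w} (ω ∩ 𝒮) (ResFin ω) ∧ IsRelativeGenerator (ω ∩ 𝒮) (ResFin ω)) ∧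
      (∀ X ∈ ResFin ω, 1 ≤ resDim ω X →
        ∃ K F, F ∈ ω ∩ 𝒮 ∧ SES K F X ∧ resDim ω K = resDim ω X - 1)) ∧
    ClosedUnderExtensions (ResFin ω) ∧
    (ClosedUnderDirectSummands ω → ClosedUnderDirectSummands (ResFin ω)) ∧
    (ClosedUnderIso ω → ClosedUnderEpiKernels 𝒮 → ClosedUnderMonoCokernels 𝒮 →
      ResFin ω ∩ 𝒮 = ResFin (ω ∩ 𝒮)) := by
  classical
  refine ⟨⟨⟨?_, ?_, ?_⟩, ?_⟩, ?_, ?_, ?_⟩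
  · -- ExtPairVanish (ω ∩ 𝒮) (ResFin ω)
    intro V hV X hX
    exact extVanish_of_resFin hproj hV hX
  · -- (ω ∩ 𝒮) ⊆ ResFin ω
    intro V hV
    exact ⟨0, mem_resDimLE_zero_of_mem hV.1⟩
  · -- relative generator
    intro X hX
    obtain ⟨n, hn⟩ := hX
    obtain ⟨K, V, hV, hK, hses⟩ := gen_lemma hext hgen n X hn
    exact ⟨V, K, hV, ⟨n - 1, hK⟩, hses⟩
  · -- dimension control
    intro X hX hdim1
    obtain ⟨n₀, hn₀⟩ := hX
    have hex : ∃ m, X ∈ ResDimLE ω m := ⟨n₀, hn₀⟩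
    set n := Nat.find hex with hn
    have hXn : X ∈ ResDimLE ω n := Nat.find_spec hex
    have hmin : ∀ m, X ∈ ResDimLE ω m → n ≤ m := fun m hm => Nat.find_min' hex hm
    have hdim : resDim ω X = n := resDim_eq hXn hmin
    have hn1 : 1 ≤ n := by
      by_contra h
      have hn0 : n = 0 := by omega
      rw [hdim, hn0] at hdim1
      simp at hdim1
    obtain ⟨K, F, hF, hK, hses⟩ := gen_lemma hext hgen n X hXn
    refine ⟨K, F, hF, hses, ?_⟩
    have hKmin : ∀ m, K ∈ ResDimLE ω m → n - 1 ≤ m := by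
      intro m hm
      have hXm : X ∈ ResDimLE ω (m + 1) := mem_resDimLE_succ hses hm hF.1
      have := hmin _ hXm
      omega
    rw [resDim_eq hK hKmin, hdim, ← Nat.cast_one (R := ℕ∞), ← ENat.coe_sub]
  · -- part (2)
    exact resFin_closedUnderExtensions hext hproj hgen
  · -- part (3)
    intro hsum
    rintro X Y i r hir ⟨n, hn⟩
    exact ⟨n, summand_resDimLE hext hproj hgen hsum n i r hir hn⟩
  · -- part (4)
    intro hiso hEK hMC
    ext X
    constructor
    · rintro ⟨⟨n, hn⟩, hXS⟩
      exact p4_sub hext hgen hiso hEK n X hn hXS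
    · rintro ⟨n, hn⟩
      obtain ⟨h₁, h₂⟩ := p4_sup hiso hEK hMC n X hn
      exact ⟨⟨n, h₁⟩, h₂⟩

end CutPaper
end

section
/- Let (𝒳, ω) be a pair of classes of objects in an abelian category 𝒞 such that ω^∧ ⊆ 𝒳, 𝒳 is left thick, and ω is closed under direct summands and is a relative cogenerator in 𝒳. The following are equivalent: (a) (𝒳, ω^∧) is a left Frobenius pair in 𝒞; (b) ω = 𝒳^⊥ ∩ 𝒳. Moreover, if either of these equivalent conditions holds, then ω = ω^∧. -/
namespace CutPaper

open CategoryTheory CategoryTheory.Limits CategoryTheory.Abelian ZeroObject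

universe w v u

variable {C : Type u} [Category.{v} C] [Abelian C]

section Aux

variable {C : Type u} [Category.{v} C] [Abelian C] [CategoryTheory.HasExt.{w} C]

open Pretriangulated in
lemma exists_retraction_of_subsingleton_ext {S : ShortComplex C} (hS : S.ShortExact)
    (h : Subsingleton (Abelian.Ext.{w} S.X₃ S.X₁ 1)) :
    ∃ r : S.X₂ ⟶ S.X₁, S.f ≫ r = 𝟙 S.X₁ := by
  letI := HasDerivedCategory.standard C
  have hδ : hS.singleδ = 0 := by
    rw [← hS.extClass_hom, Subsingleton.elim hS.extClass 0, Abelian.Ext.zero_hom]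
  have hT := hS.singleTriangle_distinguished
  have hT' := inv_rot_of_distTriang _ hT
  obtain ⟨ρ, hρ⟩ := Pretriangulated.Triangle.yoneda_exact₂ _ hT'
    (𝟙 ((hS.singleTriangle.invRotate).obj₂)) (by
      simp [Pretriangulated.Triangle.invRotate, hδ]
      erw [Functor.map_zero]
      simp
      exact zero_comp)
  let e : DerivedCategory.singleFunctor C 0 ⋙ DerivedCategory.homologyFunctor C 0 ≅ 𝟭 C :=
    Functor.isoWhiskerRight ((SingleFunctors.evaluation _ _ 0).mapIso
        (DerivedCategory.singleFunctorsPostcompQIso C)) (DerivedCategory.homologyFunctor C 0) ≪≫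
      Functor.associator _ _ _ ≪≫
      Functor.isoWhiskerLeft _ (DerivedCategory.homologyFunctorFactors C 0) ≪≫
      HomologicalComplex.homologyFunctorSingleIso C (ComplexShape.up ℤ) 0
  refine ⟨e.inv.app S.X₂ ≫ (DerivedCategory.homologyFunctor C 0).map ρ ≫ e.hom.app S.X₁, ?_⟩
  have hnat := e.inv.naturality S.f
  dsimp at hnat
  rw [← Category.assoc, hnat, Category.assoc]
  have : (DerivedCategory.homologyFunctor C 0).map ((DerivedCategory.singleFunctor C 0).map S.f)
      ≫ (DerivedCategory.homologyFunctor C 0).map ρ = 𝟙 _ := by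
    erw [← Functor.map_comp]
    have : (DerivedCategory.singleFunctor C 0).map S.f ≫ ρ = 𝟙 _ := hρ.symm
    erw [this]; exact (DerivedCategory.homologyFunctor C 0).map_id _
  erw [← Category.assoc ((DerivedCategory.homologyFunctor C 0).map _), this, Category.id_comp,
    Iso.inv_hom_id_app]; rfl

lemma subsingleton_ext₃_of_ses {S : ShortComplex C} (hS : S.ShortExact) (Y : C) {i : ℕ}
    (h₂ : Subsingleton (Abelian.Ext.{w} Y S.X₂ i))
    (h₁ : Subsingleton (Abelian.Ext.{w} Y S.X₁ (i + 1))) :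
    Subsingleton (Abelian.Ext.{w} Y S.X₃ i) := by
  have key : ∀ x : Abelian.Ext.{w} Y S.X₃ i, x = 0 := by
    intro x
    obtain ⟨x₂, hx₂⟩ := Abelian.Ext.covariant_sequence_exact₃ Y hS x rfl
      (Subsingleton.elim _ _)
    rw [← hx₂, Subsingleton.elim x₂ 0, Abelian.Ext.zero_comp]
  exact ⟨fun a b => by rw [key a, key b]⟩

end Aux

/-- Proposition 3.10. Let `(𝒳, ω)` be classes with `ω^∧ ⊆ 𝒳`, `𝒳` left
thick, `ω` closed under direct summands and a relative cogenerator in `𝒳`. Then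
`(𝒳, ω^∧)` is a left Frobenius pair iff `ω = 𝒳^⊥ ∩ 𝒳`; and in that case `ω = ω^∧`. -/
theorem leftFrobenius_resFin_iff_rightPerp
    {C : Type u} [CategoryTheory.Category.{v} C] [CategoryTheory.Abelian C]
    [CategoryTheory.HasExt.{w} C]
    (𝒳 ω : Set C)
    (h0 : ResFin ω ⊆ 𝒳) (h1 : LeftThick 𝒳)
    (h2 : ClosedUnderDirectSummands ω) (h3 : IsRelativeCogenerator ω 𝒳) :
    (LeftFrobenius.{w} 𝒳 (ResFin ω) ↔ ω = rightPerp.{w} 𝒳 ∩ 𝒳) ∧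
    (ω = rightPerp.{w} 𝒳 ∩ 𝒳 → ω = ResFin ω) := by
  have homega_sub : ω ⊆ ResFin ω := fun X hX => ⟨0, X, hX, ⟨Iso.refl X⟩⟩
  have partb : ω = rightPerp.{w} 𝒳 ∩ 𝒳 → ω = ResFin ω := by
    intro hω
    have hsub : ∀ n, ResDimLE ω n ⊆ ω := by
      intro n
      induction n with
      | zero =>
        rintro X ⟨B₀, hB₀, ⟨e⟩⟩
        exact h2 e.hom e.inv e.hom_inv_id hB₀
      | succ n ih =>
        rintro X (hX | ⟨K, B₀, hK, hB₀, f, g, z, hse⟩)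
        · exact ih hX
        · have hK' := ih hK
          rw [hω]
          refine ⟨?_, h0 ⟨n + 1, Or.inr ⟨K, B₀, hK, hB₀, f, g, z, hse⟩⟩⟩
          intro Y hY i hi
          have hB := (show B₀ ∈ rightPerp.{w} 𝒳 ∩ 𝒳 from hω ▸ hB₀).1 Y hY i hi
          have hKv := (show K ∈ rightPerp.{w} 𝒳 ∩ 𝒳 from hω ▸ hK').1 Y hY (i + 1) (by omega)
          exact subsingleton_ext₃_of_ses hse Y hB hKv
    refine Set.Subset.antisymm homega_sub ?_
    rintro X ⟨n, hn⟩
    exact hsub n hn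
  refine ⟨⟨?_, ?_⟩, partb⟩
  · intro hF
    apply Set.Subset.antisymm
    · intro W hW
      exact ⟨fun X hX => hF.2.2.1 X hX W (homega_sub hW), h3.1 hW⟩
    · rintro N ⟨hNperp, hNX⟩
      obtain ⟨W, N', hW, hN', f, g, z, hse⟩ := h3.2 N hNX
      obtain ⟨r, hr⟩ := exists_retraction_of_subsingleton_ext hse (hNperp N' hN' 1 le_rfl)
      exact h2 f r hr hW
  · intro hω
    have hres := (partb hω).symm
    rw [hres]
    exact ⟨h1, h2, fun X hX W hW =>
      (show W ∈ rightPerp.{w} 𝒳 ∩ 𝒳 from hω ▸ hW).1 X hX, h3⟩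


end CutPaper
end
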